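/- Let ψ_k(y) = θ^k[(1−η)h_k(y) + η·h_k((1−1/η)y)] and a_k = ‖ψ_k‖²_{L²(N(0,1))}. Then a₁ = 0, and for every k ≥ 2, a_k ≤ η²·(Cθ²/η²)^k for a universal constant C > 0. -/

import Mathlib

open MeasureTheory ProbabilityTheory

open Polynomial Real Finset Nat

/-- The normalized probabilist's Hermite polynomials, orthonormal in
`L²(N(0,1))`. -/
noncomputable def hermiteN (j : ℕ) (x : ℝ) : ℝ :=
  (Polynomial.aeval x (Polynomial.hermite j)) / Real.sqrt (Nat.factorial j)


lemma gr_eq : gaussianReal 0 1 =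
    (volume : Measure ℝ).withDensity
      (fun x => ((Real.toNNReal (gaussianPDFReal 0 1 x) : NNReal) : ENNReal)) := by
  rw [gaussianReal_of_var_ne_zero 0 one_ne_zero]
  rfl

lemma integral_gr (f : ℝ → ℝ) :
    ∫ y, f y ∂(gaussianReal 0 1) = ∫ y, gaussianPDFReal 0 1 y * f y := by
  rw [gr_eq, integral_withDensity_eq_integral_smul
    ((measurable_gaussianPDFReal 0 1).real_toNNReal) f]
  congr 1; funext x
  simp [NNReal.smul_def, Real.coe_toNNReal _ (gaussianPDFReal_nonneg 0 1 x)]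

lemma integrable_gr_iff (f : ℝ → ℝ) :
    Integrable f (gaussianReal 0 1) ↔
      Integrable (fun x => gaussianPDFReal 0 1 x * f x) volume := by
  rw [gr_eq, integrable_withDensity_iff_integrable_smul
    ((measurable_gaussianPDFReal 0 1).real_toNNReal)]
  constructor <;> intro h <;> refine h.congr (Filter.Eventually.of_forall fun x => ?_) <;>
    simp [NNReal.smul_def, Real.coe_toNNReal _ (gaussianPDFReal_nonneg 0 1 x)]

lemma pdf01 (x : ℝ) : gaussianPDFReal 0 1 x = (Real.sqrt (2*π))⁻¹ * Real.exp (-(x^2)/2) := by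
  simp [gaussianPDFReal]

lemma pdf_mul_expq (x : ℝ) :
    gaussianPDFReal 0 1 x * Real.exp (x^2/4) = (Real.sqrt (2*π))⁻¹ * Real.exp (-(1/4) * x^2) := by
  rw [pdf01, mul_assoc, ← Real.exp_add]
  ring_nf

lemma integrable_expq : Integrable (fun x => Real.exp (x^2/4)) (gaussianReal 0 1) := by
  rw [integrable_gr_iff]
  refine (Integrable.const_mul ?_ _).congr (Filter.Eventually.of_forall fun x => (pdf_mul_expq x).symm)
  exact integrable_exp_neg_mul_sq (by norm_num : (0:ℝ) < 1/4)

lemma integral_expq : ∫ x, Real.exp (x^2/4) ∂(gaussianReal 0 1) = Real.sqrt 2 := by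
  rw [integral_gr]
  simp_rw [pdf_mul_expq]
  rw [MeasureTheory.integral_const_mul, integral_gaussian]
  rw [show π / (1/4 : ℝ) = 4 * π by ring]
  rw [show (4:ℝ) * π = (2*2)*π by ring]
  rw [show (2*2)*π = 2 * (2*π) by ring]
  rw [Real.sqrt_mul (by norm_num) (2*π)]
  field_simp

lemma pow_le_factorial_mul_exp {x : ℝ} (hx : 0 ≤ x) (i : ℕ) : x^i ≤ i ! * Real.exp x := by
  have h := Real.sum_le_exp_of_nonneg hx (i+1)
  have h2 : x^i / i ! ≤ Real.exp x := le_trans (by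
    refine Finset.single_le_sum (f := fun j => x^j / (j ! : ℝ)) (fun j _ => by positivity) ?_
    exact Finset.self_mem_range_succ i) h
  rw [div_le_iff₀ (by positivity)] at h2
  linarith [h2]

lemma abs_pow_le (y : ℝ) (i : ℕ) :
    |y|^i ≤ 2^i * Real.sqrt (i !) * Real.exp (y^2/8) := by
  have h1 : (|y|^i)^2 ≤ (2^i * Real.sqrt (i !) * Real.exp (y^2/8))^2 := by
    have key : (y^2/4)^i ≤ i ! * Real.exp (y^2/4) := pow_le_factorial_mul_exp (by positivity) i
    have e1 : (|y|^i)^2 = (y^2)^i := by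
      rw [← pow_mul, mul_comm i 2, pow_mul, sq_abs]
    have e2 : (2^i * Real.sqrt (i !) * Real.exp (y^2/8))^2 = 4^i * i ! * Real.exp (y^2/4) := by
      rw [mul_pow, mul_pow, Real.sq_sqrt (by positivity), ← Real.exp_nat_mul]
      norm_num
      rw [show (2:ℝ) * (y^2/8) = y^2/4 by ring,
        show ((2:ℝ)^i)^2 = 4^i by rw [← pow_mul, mul_comm i 2, pow_mul]; norm_num]
    rw [e1, e2]
    have : (y^2)^i = 4^i * (y^2/4)^i := by rw [div_pow, mul_div_cancel₀]; positivity
    rw [this]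
    have h4 : (0:ℝ) < 4^i := by positivity
    calc 4^i * (y^2/4)^i ≤ 4^i * (i ! * Real.exp (y^2/4)) := by
          exact mul_le_mul_of_nonneg_left key (le_of_lt h4)
      _ = 4^i * i ! * Real.exp (y^2/4) := by ring
  have hl : (0:ℝ) ≤ |y|^i := by positivity
  have hr : (0:ℝ) ≤ 2^i * Real.sqrt (i !) * Real.exp (y^2/8) := by positivity
  nlinarith [h1, hl, hr]

lemma abs_le_expq (y : ℝ) (k : ℕ) : |y|^k ≤ 2^k * Real.sqrt (k !) * Real.exp (y^2/4) :=
  le_trans (abs_pow_le y k) (by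
    have : Real.exp (y^2/8) ≤ Real.exp (y^2/4) := Real.exp_le_exp.mpr (by nlinarith [sq_nonneg y])
    have h : (0:ℝ) ≤ 2^k * Real.sqrt (k !) := by positivity
    calc 2^k * Real.sqrt (k !) * Real.exp (y^2/8)
        ≤ 2^k * Real.sqrt (k !) * Real.exp (y^2/4) := mul_le_mul_of_nonneg_left this h
      _ = _ := rfl)

lemma integrable_monomial (k : ℕ) : Integrable (fun y : ℝ => y^k) (gaussianReal 0 1) := by
  refine Integrable.mono' (integrable_expq.const_mul (2^k * Real.sqrt (k !)))
    ((continuous_pow k).aestronglyMeasurable) (Filter.Eventually.of_forall fun y => ?_)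
  rw [Real.norm_eq_abs, abs_pow]
  exact abs_le_expq y k

lemma integrable_abs_monomial (k : ℕ) :
    Integrable (fun y : ℝ => |y|^k) (gaussianReal 0 1) := by
  have := (integrable_monomial k).abs
  refine this.congr (Filter.Eventually.of_forall fun y => ?_)
  simp [abs_pow]

lemma integral_abs_monomial_le (i j : ℕ) :
    ∫ y, |y|^(i+j) ∂(gaussianReal 0 1)
      ≤ Real.sqrt 2 * (2^i * Real.sqrt (i !)) * (2^j * Real.sqrt (j !)) := by
  have hpt : ∀ y : ℝ, |y|^(i+j)
      ≤ (2^i * Real.sqrt (i !)) * (2^j * Real.sqrt (j !)) * Real.exp (y^2/4) := by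
    intro y
    have h1 := abs_pow_le y i
    have h2 := abs_pow_le y j
    have := mul_le_mul h1 h2 (by positivity) (by positivity)
    rw [pow_add]
    calc |y|^i * |y|^j ≤ (2^i * Real.sqrt (i !) * Real.exp (y^2/8)) *
          (2^j * Real.sqrt (j !) * Real.exp (y^2/8)) := this
      _ = (2^i * Real.sqrt (i !)) * (2^j * Real.sqrt (j !)) * Real.exp (y^2/4) := by
          rw [show y^2/4 = y^2/8 + y^2/8 by ring, Real.exp_add]; ring
  calc ∫ y, |y|^(i+j) ∂(gaussianReal 0 1)
      ≤ ∫ y, (2^i * Real.sqrt (i !)) * (2^j * Real.sqrt (j !)) * Real.exp (y^2/4)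
          ∂(gaussianReal 0 1) := by
        refine integral_mono (integrable_abs_monomial (i+j)) ?_ hpt
        exact (integrable_expq.const_mul _)
    _ = Real.sqrt 2 * (2^i * Real.sqrt (i !)) * (2^j * Real.sqrt (j !)) := by
        rw [MeasureTheory.integral_const_mul, integral_expq]; ring

lemma dfac_id (m : ℕ) : (2*m-1)‼ * (2^m * m !) = (2*m)! := by
  cases m with
  | zero => simp
  | succ k =>
      have h1 : 2*(k+1) = (2*k+1) + 1 := by ring
      have h2 : ((2*k+1) + 1)! = ((2*k+1)+1)‼ * (2*k+1)‼ :=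
        Nat.factorial_eq_mul_doubleFactorial (2*k+1)
      have h3 : 2*(k+1) - 1 = 2*k+1 := by omega
      rw [h3, h1, h2, show (2*k+1)+1 = 2*(k+1) by ring, Nat.doubleFactorial_two_mul]
      ring

lemma hermite_coeff_id (m i : ℕ) :
    ((2*m-1)‼ * Nat.choose (2*m+i) i) * (2^m * m ! * i !) = (2*m+i)! := by
  have h1 := dfac_id m
  have h2 : Nat.choose (2*m+i) i * i ! * (2*m)! = (2*m+i)! := by
    have := Nat.choose_mul_factorial_mul_factorial
      (show i ≤ 2*m+i from Nat.le_add_left i (2*m))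
    simpa [Nat.add_sub_cancel] using this
  calc ((2*m-1)‼ * Nat.choose (2*m+i) i) * (2^m * m ! * i !)
      = Nat.choose (2*m+i) i * i ! * ((2*m-1)‼ * (2^m * m !)) := by ring
    _ = Nat.choose (2*m+i) i * i ! * (2*m)! := by rw [h1]
    _ = (2*m+i)! := h2

lemma factorial_add_le (a b : ℕ) : (a+b)! ≤ b ! * (a+b)^a := by
  induction a with
  | zero => simp
  | succ k ih =>
      have h1 : (k+1+b)! = (k+1+b) * (k+b)! := by
        rw [show k+1+b = (k+b)+1 by ring, Nat.factorial_succ]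
      rw [h1]
      calc (k+1+b) * (k+b)! ≤ (k+1+b) * (b ! * (k+b)^k) :=
            Nat.mul_le_mul_left _ ih
        _ ≤ (k+1+b) * (b ! * (k+1+b)^k) := by
            refine Nat.mul_le_mul_left _ (Nat.mul_le_mul_left _ ?_)
            exact Nat.pow_le_pow_left (by omega) k
        _ = b ! * (k+1+b)^(k+1) := by ring

lemma sq_le_sq_nonneg {a b : ℝ} (ha : 0 ≤ a) (hb : 0 ≤ b) (h : a^2 ≤ b^2) : a ≤ b := by
  nlinarith [h, ha, hb]

lemma coeff_term_bound (n i : ℕ) (hi : i ≤ n) :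
    |((hermite n).coeff i : ℝ)| * Real.sqrt (i !)
      ≤ Real.sqrt (n !) * Real.exp ((n:ℝ)/2) := by
  by_cases hodd : Odd (n + i)
  · rw [coeff_hermite_of_odd_add hodd]
    simp
    positivity
  · have heven : Even (n + i) := Nat.not_odd_iff_even.mp hodd
    obtain ⟨m, hm⟩ : ∃ m, n = 2*m + i := by
      obtain ⟨k, hk⟩ := heven
      exact ⟨(n - i)/2, by omega⟩
    subst hm
    rw [coeff_hermite_explicit m i]
    set A : ℕ := (2*m-1)‼ * Nat.choose (2*m+i) i with hA
    have habs : |((((-1:ℤ)) ^ m * ((2 * m - 1)‼ : ℤ) * (Nat.choose (2 * m + i) i : ℤ) : ℤ) : ℝ)|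
        = (A : ℝ) := by
      rw [hA]
      push_cast
      rw [abs_mul, abs_mul, abs_pow, abs_neg, abs_one, one_pow, one_mul,
        abs_of_nonneg (by positivity), abs_of_nonneg (by positivity)]
    rw [habs]
    have hid : (A : ℝ) * (2^m * m ! * i !) = ((2*m+i)! : ℝ) := by
      exact_mod_cast congrArg (fun x : ℕ => (x : ℝ)) (hermite_coeff_id m i)
    have hkey : (A : ℝ) ≤ 2^m * m ! * Real.exp ((2*m+i : ℕ)) := by
      have hnat : A * (2^m * m !) * i ! ≤ i ! * ((2*m+i))^(2*m) := by
        calc A * (2^m * m !) * i ! = (2*m+i)! := by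
              rw [← hermite_coeff_id m i]; ring
          _ ≤ i ! * ((2*m+i))^(2*m) := factorial_add_le (2*m) i
      have hcancel : A * (2^m * m !) ≤ ((2*m+i))^(2*m) := by
        have hipos : 0 < i ! := Nat.factorial_pos i
        nlinarith [hnat, hipos]
      have hreal : (A : ℝ) * (2^m * m !) ≤ ((2*m+i : ℕ) : ℝ)^(2*m) := by exact_mod_cast hcancel
      have hpow : ((2*m+i : ℕ) : ℝ)^(2*m) ≤ (2^m * m !)^2 * Real.exp ((2*m+i : ℕ)) := by
        have h7 : (((2*m+i : ℕ) : ℝ)/2)^m ≤ m ! * Real.exp (((2*m+i : ℕ) : ℝ)/2) :=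
          pow_le_factorial_mul_exp (by positivity) m
        have h8 : ((2*m+i : ℕ) : ℝ)^m ≤ 2^m * m ! * Real.exp (((2*m+i : ℕ) : ℝ)/2) := by
          have := mul_le_mul_of_nonneg_left h7 (by positivity : (0:ℝ) ≤ 2^m)
          calc ((2*m+i : ℕ) : ℝ)^m = 2^m * (((2*m+i : ℕ) : ℝ)/2)^m := by
                rw [← mul_pow]; congr 1; ring
            _ ≤ 2^m * (m ! * Real.exp (((2*m+i : ℕ) : ℝ)/2)) := this
            _ = 2^m * m ! * Real.exp (((2*m+i : ℕ) : ℝ)/2) := by ring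
        calc ((2*m+i : ℕ) : ℝ)^(2*m) = (((2*m+i : ℕ) : ℝ)^m)^2 := by
              rw [← pow_mul, mul_comm m 2]
          _ ≤ (2^m * m ! * Real.exp (((2*m+i : ℕ) : ℝ)/2))^2 := by
              exact pow_le_pow_left₀ (by positivity) h8 2
          _ = (2^m * m !)^2 * Real.exp ((2*m+i : ℕ)) := by
              rw [mul_pow, pow_two (Real.exp _), ← Real.exp_add,
                show ((2*m+i:ℕ):ℝ)/2 + ((2*m+i:ℕ):ℝ)/2 = ((2*m+i:ℕ):ℝ) by ring]
      have hfacpos : (0:ℝ) < 2^m * m ! := by positivity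
      nlinarith [hreal, hpow, hfacpos, Real.exp_pos (((2*m+i : ℕ)):ℝ)]
    refine sq_le_sq_nonneg (by positivity) (by positivity) ?_
    rw [mul_pow, mul_pow, Real.sq_sqrt (by positivity : (0:ℝ) ≤ (i ! : ℝ)),
      Real.sq_sqrt (by positivity : (0:ℝ) ≤ (((2*m+i)!) : ℝ)),
      pow_two (Real.exp _), ← Real.exp_add,
      show ((2*m+i:ℕ):ℝ)/2 + ((2*m+i:ℕ):ℝ)/2 = ((2*m+i:ℕ):ℝ) by ring]
    have e3 : ((A:ℝ))^2 * (i !) = (A:ℝ) * ((A:ℝ) * (i !)) := by ring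
    rw [e3]
    have e4 : ((A:ℝ) * (i !)) * (2^m * m !) = ((2*m+i)! : ℝ) := by
      rw [← hid]; ring
    have hAnn : (0:ℝ) ≤ (A:ℝ) * (i !) := by positivity
    calc (A:ℝ) * ((A:ℝ) * (i !))
        ≤ (2^m * m ! * Real.exp ((2*m+i : ℕ))) * ((A:ℝ) * (i !)) :=
          mul_le_mul_of_nonneg_right hkey hAnn
      _ = (((A:ℝ) * (i !)) * (2^m * m !)) * Real.exp ((2*m+i : ℕ)) := by ring
      _ = ((2*m+i)! : ℝ) * Real.exp ((2*m+i : ℕ)) := by rw [e4]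


lemma exp_half_le_two : Real.exp (1/2 : ℝ) ≤ 2 := by
  refine sq_le_sq_nonneg (Real.exp_nonneg _) (by norm_num) ?_
  rw [pow_two, ← Real.exp_add]
  rw [show (1/2 + 1/2 : ℝ) = 1 by norm_num]
  nlinarith [Real.exp_one_lt_d9]

lemma sum_v_le (n : ℕ) (c : ℝ) (hc : 1 ≤ |c|) :
    ∑ i ∈ range (n+1), |((hermite n).coeff i : ℝ)| * ((2*|c|)^i * Real.sqrt (i !))
      ≤ Real.sqrt (n !) * (8*|c|)^n := by
  have hterm : ∀ i ∈ range (n+1),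
      |((hermite n).coeff i : ℝ)| * ((2*|c|)^i * Real.sqrt (i !))
        ≤ (2*|c|)^n * (Real.sqrt (n !) * Real.exp ((n:ℝ)/2)) := by
    intro i hi
    have hin : i ≤ n := Nat.lt_succ_iff.mp (mem_range.mp hi)
    have h1 : (2*|c|)^i ≤ (2*|c|)^n := by
      refine pow_le_pow_right₀ ?_ hin
      nlinarith [hc]
    have h2 := coeff_term_bound n i hin
    have hnn1 : (0:ℝ) ≤ |((hermite n).coeff i : ℝ)| * Real.sqrt (i !) := by positivity
    calc |((hermite n).coeff i : ℝ)| * ((2*|c|)^i * Real.sqrt (i !))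
        = (2*|c|)^i * (|((hermite n).coeff i : ℝ)| * Real.sqrt (i !)) := by ring
      _ ≤ (2*|c|)^n * (|((hermite n).coeff i : ℝ)| * Real.sqrt (i !)) :=
          mul_le_mul_of_nonneg_right h1 hnn1
      _ ≤ (2*|c|)^n * (Real.sqrt (n !) * Real.exp ((n:ℝ)/2)) := by
          refine mul_le_mul_of_nonneg_left h2 (by positivity)
  calc ∑ i ∈ range (n+1), |((hermite n).coeff i : ℝ)| * ((2*|c|)^i * Real.sqrt (i !))
      ≤ ∑ _i ∈ range (n+1), (2*|c|)^n * (Real.sqrt (n !) * Real.exp ((n:ℝ)/2)) :=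
        Finset.sum_le_sum hterm
    _ = (n+1 : ℕ) * ((2*|c|)^n * (Real.sqrt (n !) * Real.exp ((n:ℝ)/2))) := by
        rw [Finset.sum_const, card_range, nsmul_eq_mul]
    _ ≤ Real.sqrt (n !) * (8*|c|)^n := by
        have hn1 : ((n+1 : ℕ) : ℝ) ≤ 2^n := by
          exact_mod_cast Nat.succ_le_of_lt (Nat.lt_two_pow_self (n := n))
        have hexp : Real.exp ((n:ℝ)/2) ≤ 2^n := by
          rw [show ((n:ℝ)/2) = (n:ℕ) * (1/2 : ℝ) by push_cast; ring, Real.exp_nat_mul]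
          exact pow_le_pow_left₀ (Real.exp_nonneg _) exp_half_le_two n
        calc ((n+1 : ℕ) : ℝ) * ((2*|c|)^n * (Real.sqrt (n !) * Real.exp ((n:ℝ)/2)))
            ≤ 2^n * ((2*|c|)^n * (Real.sqrt (n !) * 2^n)) := by
              refine mul_le_mul hn1 ?_ (by positivity) (by positivity)
              refine mul_le_mul_of_nonneg_left ?_ (by positivity)
              exact mul_le_mul_of_nonneg_left hexp (Real.sqrt_nonneg _)
          _ = Real.sqrt (n !) * (8*|c|)^n := by
              rw [show (8:ℝ)*|c| = 2*(2*|c|)*2 by ring,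
                mul_pow (2*(2*|c|)) 2 n, mul_pow 2 (2*|c|) n]
              ring

lemma aeval_expand (n : ℕ) (x : ℝ) :
    (Polynomial.aeval x (hermite n) : ℝ)
      = ∑ i ∈ range (n+1), ((hermite n).coeff i : ℝ) * x^i := by
  rw [Polynomial.aeval_eq_sum_range (R := ℤ)]
  rw [natDegree_hermite]
  congr 1
  funext i
  simp [zsmul_eq_mul]

lemma sq_expand (n : ℕ) (c : ℝ) (y : ℝ) :
    ((Polynomial.aeval (c*y) (hermite n) : ℝ))^2
      = ∑ i ∈ range (n+1), ∑ j ∈ range (n+1),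
          (((hermite n).coeff i : ℝ) * c^i * ((hermite n).coeff j : ℝ) * c^j) * y^(i+j) := by
  rw [aeval_expand, pow_two, Finset.sum_mul_sum]
  refine Finset.sum_congr rfl fun i _ => Finset.sum_congr rfl fun j _ => ?_
  rw [mul_pow, mul_pow, pow_add]
  ring

lemma hermite_sq_integrable (n : ℕ) (c : ℝ) :
    Integrable (fun y => ((Polynomial.aeval (c*y) (hermite n) : ℝ))^2) (gaussianReal 0 1) := by
  have : (fun y : ℝ => ((Polynomial.aeval (c*y) (hermite n) : ℝ))^2)
      = fun y => ∑ i ∈ range (n+1), ∑ j ∈ range (n+1),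
          (((hermite n).coeff i : ℝ) * c^i * ((hermite n).coeff j : ℝ) * c^j) * y^(i+j) := by
    funext y; exact sq_expand n c y
  rw [this]
  refine integrable_finset_sum _ fun i _ => integrable_finset_sum _ fun j _ => ?_
  exact (integrable_monomial (i+j)).const_mul _

lemma hermiteN_sq_integrable (n : ℕ) (c : ℝ) :
    Integrable (fun y => (hermiteN n (c*y))^2) (gaussianReal 0 1) := by
  have : (fun y => (hermiteN n (c*y))^2)
      = fun y => ((Polynomial.aeval (c*y) (hermite n) : ℝ))^2 / (n !) := by
    funext y
    rw [hermiteN, div_pow, Real.sq_sqrt (by positivity)]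
  rw [this]
  exact (hermite_sq_integrable n c).div_const _

lemma hermite_sq_moment (n : ℕ) (c : ℝ) (hc : 1 ≤ |c|) :
    ∫ y, (hermiteN n (c*y))^2 ∂(gaussianReal 0 1) ≤ 2 * (64*c^2)^n := by
  have hrw : (fun y => (hermiteN n (c*y))^2)
      = fun y => ((Polynomial.aeval (c*y) (hermite n) : ℝ))^2 / (n !) := by
    funext y
    rw [hermiteN, div_pow, Real.sq_sqrt (by positivity)]
  rw [hrw]
  rw [integral_div]
  -- compute the integral of the square as a double sum
  have hexp : ∫ y, ((Polynomial.aeval (c*y) (hermite n) : ℝ))^2 ∂(gaussianReal 0 1)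
      = ∑ i ∈ range (n+1), ∑ j ∈ range (n+1),
          (((hermite n).coeff i : ℝ) * c^i * ((hermite n).coeff j : ℝ) * c^j)
            * ∫ y, y^(i+j) ∂(gaussianReal 0 1) := by
    calc ∫ y, ((Polynomial.aeval (c*y) (hermite n) : ℝ))^2 ∂(gaussianReal 0 1)
        = ∫ y, (∑ i ∈ range (n+1), ∑ j ∈ range (n+1),
            (((hermite n).coeff i : ℝ) * c^i * ((hermite n).coeff j : ℝ) * c^j) * y^(i+j))
            ∂(gaussianReal 0 1) := by
          refine integral_congr_ae (Filter.Eventually.of_forall fun y => sq_expand n c y)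
      _ = _ := by
          rw [integral_finset_sum _ fun i _ =>
            integrable_finset_sum _ fun j _ => (integrable_monomial (i+j)).const_mul _]
          refine Finset.sum_congr rfl fun i _ => ?_
          rw [integral_finset_sum _ fun j _ => (integrable_monomial (i+j)).const_mul _]
          refine Finset.sum_congr rfl fun j _ => ?_
          exact MeasureTheory.integral_const_mul _ _
  rw [hexp]
  -- bound the double sum
  set v : ℕ → ℝ := fun i => |((hermite n).coeff i : ℝ)| * ((2*|c|)^i * Real.sqrt (i !)) with hv
  have hbound : ∑ i ∈ range (n+1), ∑ j ∈ range (n+1),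
      (((hermite n).coeff i : ℝ) * c^i * ((hermite n).coeff j : ℝ) * c^j)
        * ∫ y, y^(i+j) ∂(gaussianReal 0 1)
      ≤ Real.sqrt 2 * (∑ i ∈ range (n+1), v i) * (∑ i ∈ range (n+1), v i) := by
    have h1 : ∀ i ∈ range (n+1), ∀ j ∈ range (n+1),
        (((hermite n).coeff i : ℝ) * c^i * ((hermite n).coeff j : ℝ) * c^j)
          * ∫ y, y^(i+j) ∂(gaussianReal 0 1) ≤ Real.sqrt 2 * (v i * v j) := by
      intro i _ j _
      set t := ((hermite n).coeff i : ℝ) * c^i * ((hermite n).coeff j : ℝ) * c^j with ht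
      have step1 : t * ∫ y, y^(i+j) ∂(gaussianReal 0 1)
          ≤ |t| * ∫ y, |y|^(i+j) ∂(gaussianReal 0 1) := by
        have e1 : ∫ y, |y|^(i+j) ∂(gaussianReal 0 1) = ∫ y, |y^(i+j)| ∂(gaussianReal 0 1) := by
          refine integral_congr_ae (Filter.Eventually.of_forall fun y => ?_)
          simp [abs_pow]
        calc t * ∫ y, y^(i+j) ∂(gaussianReal 0 1)
            ≤ |t * ∫ y, y^(i+j) ∂(gaussianReal 0 1)| := le_abs_self _
          _ = |t| * |∫ y, y^(i+j) ∂(gaussianReal 0 1)| := abs_mul _ _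
          _ ≤ |t| * ∫ y, |y^(i+j)| ∂(gaussianReal 0 1) := by
              refine mul_le_mul_of_nonneg_left ?_ (abs_nonneg _)
              calc |∫ y, y^(i+j) ∂(gaussianReal 0 1)| = ‖∫ y, y^(i+j) ∂(gaussianReal 0 1)‖ :=
                  (Real.norm_eq_abs _).symm
                _ ≤ ∫ y, ‖y^(i+j)‖ ∂(gaussianReal 0 1) := norm_integral_le_integral_norm _
                _ = ∫ y, |y^(i+j)| ∂(gaussianReal 0 1) := by
                    refine integral_congr_ae (Filter.Eventually.of_forall fun y => ?_)
                    simp [Real.norm_eq_abs]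
          _ = |t| * ∫ y, |y|^(i+j) ∂(gaussianReal 0 1) := by rw [e1]
      have step2 : |t| * ∫ y, |y|^(i+j) ∂(gaussianReal 0 1)
          ≤ |t| * (Real.sqrt 2 * (2^i * Real.sqrt (i !)) * (2^j * Real.sqrt (j !))) := by
        refine mul_le_mul_of_nonneg_left (integral_abs_monomial_le i j) (abs_nonneg _)
      have step3 : |t| * (Real.sqrt 2 * (2^i * Real.sqrt (i !)) * (2^j * Real.sqrt (j !)))
          = Real.sqrt 2 * (v i * v j) := by
        rw [ht, hv]
        simp only [abs_mul, abs_pow]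
        rw [mul_pow 2 |c| i, mul_pow 2 |c| j]
        ring
      calc t * ∫ y, y^(i+j) ∂(gaussianReal 0 1)
          ≤ |t| * ∫ y, |y|^(i+j) ∂(gaussianReal 0 1) := step1
        _ ≤ |t| * (Real.sqrt 2 * (2^i * Real.sqrt (i !)) * (2^j * Real.sqrt (j !))) := step2
        _ = Real.sqrt 2 * (v i * v j) := step3
    calc ∑ i ∈ range (n+1), ∑ j ∈ range (n+1),
        (((hermite n).coeff i : ℝ) * c^i * ((hermite n).coeff j : ℝ) * c^j)
          * ∫ y, y^(i+j) ∂(gaussianReal 0 1)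
        ≤ ∑ i ∈ range (n+1), ∑ j ∈ range (n+1), Real.sqrt 2 * (v i * v j) := by
          refine Finset.sum_le_sum fun i hi => Finset.sum_le_sum fun j hj => h1 i hi j hj
      _ = Real.sqrt 2 * ∑ i ∈ range (n+1), ∑ j ∈ range (n+1), v i * v j := by
          rw [Finset.mul_sum]
          refine Finset.sum_congr rfl fun i _ => ?_
          rw [Finset.mul_sum]
      _ = Real.sqrt 2 * ((∑ i ∈ range (n+1), v i) * (∑ i ∈ range (n+1), v i)) := by
          rw [← Finset.sum_mul_sum]
      _ = Real.sqrt 2 * (∑ i ∈ range (n+1), v i) * (∑ i ∈ range (n+1), v i) := by ring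
  have hsum := sum_v_le n c hc
  have hvnn : 0 ≤ ∑ i ∈ range (n+1), v i := by
    refine Finset.sum_nonneg fun i _ => ?_
    rw [hv]; positivity
  have hfinal : Real.sqrt 2 * (∑ i ∈ range (n+1), v i) * (∑ i ∈ range (n+1), v i)
      ≤ Real.sqrt 2 * (Real.sqrt (n !) * (8*|c|)^n) * (Real.sqrt (n !) * (8*|c|)^n) := by
    have h8 : (0:ℝ) ≤ Real.sqrt (n !) * (8*|c|)^n := by positivity
    have := mul_le_mul hsum hsum hvnn h8
    calc Real.sqrt 2 * (∑ i ∈ range (n+1), v i) * (∑ i ∈ range (n+1), v i)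
        = Real.sqrt 2 * ((∑ i ∈ range (n+1), v i) * (∑ i ∈ range (n+1), v i)) := by ring
      _ ≤ Real.sqrt 2 * ((Real.sqrt (n !) * (8*|c|)^n) * (Real.sqrt (n !) * (8*|c|)^n)) :=
          mul_le_mul_of_nonneg_left this (Real.sqrt_nonneg _)
      _ = _ := by ring
  have hval : Real.sqrt 2 * (Real.sqrt (n !) * (8*|c|)^n) * (Real.sqrt (n !) * (8*|c|)^n)
      = Real.sqrt 2 * (n !) * (64*c^2)^n := by
    have e1 : Real.sqrt (n !) * Real.sqrt (n !) = (n ! : ℝ) :=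
      Real.mul_self_sqrt (by positivity)
    have e2 : ((8:ℝ)*|c|)^n * (8*|c|)^n = (64*c^2)^n := by
      rw [← mul_pow]
      congr 1
      rw [show (8*|c|) * (8*|c|) = 64 * (|c| * |c|) by ring, abs_mul_abs_self]
      ring
    calc Real.sqrt 2 * (Real.sqrt (n !) * (8*|c|)^n) * (Real.sqrt (n !) * (8*|c|)^n)
        = Real.sqrt 2 * (Real.sqrt (n !) * Real.sqrt (n !)) * ((8*|c|)^n * (8*|c|)^n) := by ring
      _ = Real.sqrt 2 * (n !) * (64*c^2)^n := by rw [e1, e2]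
  have hfacpos : (0:ℝ) < (n ! : ℝ) := by positivity
  rw [div_le_iff₀ hfacpos]
  have hsqrt2 : Real.sqrt 2 ≤ 2 := by
    refine sq_le_sq_nonneg (Real.sqrt_nonneg _) (by norm_num) ?_
    rw [Real.sq_sqrt (by norm_num : (0:ℝ) ≤ 2)]
    norm_num
  calc (∑ i ∈ range (n+1), ∑ j ∈ range (n+1),
      (((hermite n).coeff i : ℝ) * c^i * ((hermite n).coeff j : ℝ) * c^j)
        * ∫ y, y^(i+j) ∂(gaussianReal 0 1))
      ≤ Real.sqrt 2 * (n !) * (64*c^2)^n := by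
        rw [← hval]; exact le_trans hbound hfinal
    _ ≤ 2 * (64*c^2)^n * (n !) := by
        have h0 : (0:ℝ) ≤ (64*c^2)^n := by positivity
        have h := mul_nonneg (mul_nonneg (sub_nonneg.mpr hsqrt2) hfacpos.le) h0
        nlinarith [h]

lemma hermiteN_one (x : ℝ) : hermiteN 1 x = x := by
  rw [hermiteN, Polynomial.hermite_one]
  simp

lemma continuous_hermiteN (j : ℕ) : Continuous (hermiteN j) := by
  unfold hermiteN
  exact (Polynomial.continuous_aeval (hermite j)).div_const _


set_option maxHeartbeats 1000000 in
/-- Bounds on the `L²(N(0,1))` norms of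
`ψ_k(y) = θ^k[(1-η)h_k(y) + η·h_k((1-1/η)y)]`: there is a universal constant
`C > 0` such that `a₁ = 0` and `a_k ≤ η²(Cθ²/η²)^k` for all `k ≥ 2`, where
`a_k = ‖ψ_k‖²_{L²(N(0,1))}`. -/
theorem psi_coefficient_bound :
    ∃ C : ℝ, 0 < C ∧
      ∀ (θ η : ℝ), 0 < θ → θ < 1 → 0 < η → η < 1 / 2 →
        let ψ : ℕ → ℝ → ℝ := fun k y =>
          θ ^ k * ((1 - η) * hermiteN k y + η * hermiteN k ((1 - 1 / η) * y))
        let a : ℕ → ℝ := fun k => ∫ y, (ψ k y) ^ 2 ∂(gaussianReal 0 1)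
        a 1 = 0 ∧ ∀ k : ℕ, 2 ≤ k → a k ≤ η ^ 2 * (C * θ ^ 2 / η ^ 2) ^ k := by
  refine ⟨1024, by norm_num, ?_⟩
  intro θ η hθ hθ1 hη hη2 ψ a
  have hηne : η ≠ 0 := ne_of_gt hη
  set c : ℝ := 1 - 1/η with hcdef
  have hinv : 2 < 1/η := by
    rw [lt_div_iff₀ hη]; linarith
  have hcneg : c < -1 := by rw [hcdef]; linarith
  have hcabs : |c| = 1/η - 1 := by
    rw [abs_of_neg (by linarith : c < 0)]; rw [hcdef]; ring
  have hc1 : 1 ≤ |c| := by rw [hcabs]; linarith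
  have hcle : |c| ≤ 1/η := by rw [hcabs]; linarith
  have hcsq : c^2 ≤ (1/η)^2 := by
    rw [← sq_abs]
    exact pow_le_pow_left₀ (abs_nonneg c) hcle 2
  constructor
  · -- a 1 = 0
    have hzero : ∀ y : ℝ, ψ 1 y = 0 := by
      intro y
      show θ ^ 1 * ((1 - η) * hermiteN 1 y + η * hermiteN 1 ((1 - 1 / η) * y)) = 0
      rw [hermiteN_one, hermiteN_one]
      field_simp
      ring
    have : (fun y => (ψ 1 y)^2) = fun _ => (0:ℝ) := by
      funext y; rw [hzero y]; norm_num
    show (∫ y, (ψ 1 y) ^ 2 ∂(gaussianReal 0 1)) = 0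
    rw [this, integral_zero]
  · intro k hk
    have hk1 : 1 ≤ k := le_trans (by norm_num) hk
    -- pointwise bound and integrability
    set g : ℝ → ℝ := fun y => hermiteN k (c*y) with hg
    set f : ℝ → ℝ := fun y => hermiteN k (1*y) with hf
    have hψ : ∀ y, ψ k y = θ^k * ((1-η) * f y + η * g y) := by
      intro y
      show θ ^ k * ((1 - η) * hermiteN k y + η * hermiteN k ((1 - 1 / η) * y)) = _
      rw [hf, hg, hcdef]
      norm_num
    set B : ℝ → ℝ := fun y =>
      (2*θ^(2*k)*(1-η)^2) * (f y)^2 + (2*θ^(2*k)*η^2) * (g y)^2 with hB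
    have hpt : ∀ y, (ψ k y)^2 ≤ B y := by
      intro y
      rw [hψ y]
      show _ ≤ 2*θ^(2*k)*(1-η)^2 * (f y)^2 + 2*θ^(2*k)*η^2 * (g y)^2
      have hθ2 : (θ^k)^2 = θ^(2*k) := by rw [← pow_mul, mul_comm]
      rw [← hθ2]
      nlinarith [sq_nonneg (θ^k * ((1-η) * f y - η * g y))]
    have hIf : Integrable (fun y => (f y)^2) (gaussianReal 0 1) := hermiteN_sq_integrable k 1
    have hIg : Integrable (fun y => (g y)^2) (gaussianReal 0 1) := hermiteN_sq_integrable k c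
    have hIB : Integrable B (gaussianReal 0 1) :=
      (hIf.const_mul _).add (hIg.const_mul _)
    have hIψ : Integrable (fun y => (ψ k y)^2) (gaussianReal 0 1) := by
      refine hIB.mono' ?_ (Filter.Eventually.of_forall fun y => ?_)
      · have hcont : Continuous fun y => (ψ k y)^2 := by
          have : Continuous (ψ k) := by
            have h1 : Continuous fun y : ℝ => hermiteN k y := continuous_hermiteN k
            have h2 : Continuous fun y : ℝ => hermiteN k ((1 - 1/η) * y) :=
              (continuous_hermiteN k).comp (continuous_const.mul continuous_id)
            exact continuous_const.mul ((continuous_const.mul h1).add (continuous_const.mul h2))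
          exact this.pow 2
        exact hcont.aestronglyMeasurable
      · rw [Real.norm_eq_abs, abs_of_nonneg (sq_nonneg _)]
        exact hpt y
    have hstep1 : a k ≤ ∫ y, B y ∂(gaussianReal 0 1) := by
      show (∫ y, (ψ k y) ^ 2 ∂(gaussianReal 0 1)) ≤ _
      exact integral_mono hIψ hIB hpt
    have hsplit : ∫ y, B y ∂(gaussianReal 0 1)
        = (2*θ^(2*k)*(1-η)^2) * (∫ y, (f y)^2 ∂(gaussianReal 0 1))
          + (2*θ^(2*k)*η^2) * (∫ y, (g y)^2 ∂(gaussianReal 0 1)) := by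
      rw [hB]
      rw [integral_add (hIf.const_mul _) (hIg.const_mul _),
        MeasureTheory.integral_const_mul, MeasureTheory.integral_const_mul]
    have hmf : ∫ y, (f y)^2 ∂(gaussianReal 0 1) ≤ 2*64^k := by
      have := hermite_sq_moment k 1 (by norm_num)
      calc ∫ y, (f y)^2 ∂(gaussianReal 0 1) ≤ 2*(64*(1:ℝ)^2)^k := this
        _ = 2*64^k := by norm_num
    have hmg : ∫ y, (g y)^2 ∂(gaussianReal 0 1) ≤ 2*(64/η^2)^k := by
      have h1 := hermite_sq_moment k c hc1
      have h2 : (64*c^2)^k ≤ (64/η^2)^k := by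
        refine pow_le_pow_left₀ (by positivity) ?_ k
        have hcsq' : c^2 ≤ (η^2)⁻¹ := by
          rw [one_div, inv_pow] at hcsq
          exact hcsq
        have hinvnn : (0:ℝ) ≤ (η^2)⁻¹ := by positivity
        calc 64*c^2 ≤ 64*(η^2)⁻¹ := by nlinarith [hcsq']
          _ = 64/η^2 := by rw [div_eq_mul_inv]
      calc ∫ y, (g y)^2 ∂(gaussianReal 0 1) ≤ 2*(64*c^2)^k := h1
        _ ≤ 2*(64/η^2)^k := by linarith
    -- final arithmetic
    have hIfnn : 0 ≤ ∫ y, (f y)^2 ∂(gaussianReal 0 1) :=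
      integral_nonneg fun y => sq_nonneg _
    have hIgnn : 0 ≤ ∫ y, (g y)^2 ∂(gaussianReal 0 1) :=
      integral_nonneg fun y => sq_nonneg _
    have hcoef1 : (0:ℝ) ≤ 2*θ^(2*k)*(1-η)^2 := by positivity
    have hcoef2 : (0:ℝ) ≤ 2*θ^(2*k)*η^2 := by positivity
    have hchain : a k ≤ (2*θ^(2*k)*(1-η)^2) * (2*64^k) + (2*θ^(2*k)*η^2) * (2*(64/η^2)^k) := by
      calc a k ≤ ∫ y, B y ∂(gaussianReal 0 1) := hstep1
        _ = _ := hsplit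
        _ ≤ _ := by
            refine add_le_add (mul_le_mul_of_nonneg_left hmf hcoef1)
              (mul_le_mul_of_nonneg_left hmg hcoef2)
    have h1me : (1-η)^2 ≤ 1 := by nlinarith
    have hchain2 : a k ≤ 4*θ^(2*k)*64^k + 4*θ^(2*k)*η^2*(64/η^2)^k := by
      have t1 : (2*θ^(2*k)*(1-η)^2) * (2*64^k) ≤ 4*θ^(2*k)*64^k := by
        have : (0:ℝ) ≤ θ^(2*k)*64^k := by positivity
        nlinarith [h1me, this]
      have t2 : (2*θ^(2*k)*η^2) * (2*(64/η^2)^k) = 4*θ^(2*k)*η^2*(64/η^2)^k := by ring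
      linarith [hchain, t1, t2.le]
    -- now prove 4*θ^(2*k)*64^k + 4*θ^(2*k)*η^2*(64/η^2)^k ≤ η^2*(1024*θ^2/η^2)^k
    set T : ℝ := (θ^2)^k with hT
    set E : ℝ := (η^2)^k with hE
    have hTpos : 0 < T := by rw [hT]; positivity
    have hEpos : 0 < E := by rw [hE]; positivity
    have hθT : θ^(2*k) = T := by rw [hT, ← pow_mul, mul_comm]
    have hEle : E ≤ η^2 := by
      rw [hE]
      calc (η^2)^k ≤ (η^2)^1 := by
            refine pow_le_pow_of_le_one (by positivity) (by nlinarith) hk1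
        _ = η^2 := pow_one _
    have h8 : (8:ℝ)*64^k ≤ 1024^k := by
      have h16 : (8:ℝ) ≤ 16^k := by
        calc (8:ℝ) ≤ 16^1 := by norm_num
          _ ≤ 16^k := pow_le_pow_right₀ (by norm_num) hk1
      calc (8:ℝ)*64^k ≤ 16^k*64^k := by
            refine mul_le_mul_of_nonneg_right h16 (by positivity)
        _ = 1024^k := by rw [← mul_pow]; norm_num
    have hfinal : 4*T*64^k + 4*T*η^2*(64/η^2)^k ≤ η^2*(1024*θ^2/η^2)^k := by
      have hd1 : ((64:ℝ)/η^2)^k = 64^k/E := by rw [div_pow, hE]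
      have hd2 : ((1024*θ^2)/η^2)^k = (1024^k*T)/E := by rw [div_pow, hE, hT, mul_pow]
      rw [hd1, hd2]
      have hmul : (4*T*64^k + 4*T*η^2*(64^k/E))*E ≤ (η^2*((1024^k*T)/E))*E := by
        have lhs_eq : (4*T*64^k + 4*T*η^2*(64^k/E))*E = 4*T*64^k*E + 4*T*η^2*64^k := by
          field_simp
        have rhs_eq : (η^2*((1024^k*T)/E))*E = η^2*(1024^k*T) := by
          field_simp
        rw [lhs_eq, rhs_eq]
        have h64nn : (0:ℝ) ≤ (64:ℝ)^k := by positivity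
        have s1 : 4*T*64^k*E ≤ 4*T*64^k*η^2 := by
          refine mul_le_mul_of_nonneg_left hEle ?_
          have := hTpos.le
          nlinarith [hTpos.le, h64nn, mul_nonneg hTpos.le h64nn]
        have s2 : (8*64^k)*(T*η^2) ≤ 1024^k*(T*η^2) :=
          mul_le_mul_of_nonneg_right h8 (mul_nonneg hTpos.le (sq_nonneg η))
        nlinarith [s1, s2]
      exact le_of_mul_le_mul_right hmul hEpos
    rw [hθT] at hchain2
    linarith [hchain2, hfinal]
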